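/- On H_m(𝔹), the row operator M_z : H_m(𝔹)ⁿ → H_m(𝔹), (f_i) ↦ ∑ z_i f_i, satisfies M_z M_z* = ∑_{j=1}^∞ (j/(m+j-1)) P_{ℍ_j}, where P_{ℍ_j} is the orthogonal projection onto the space of homogeneous polynomials of degree j. -/

import Mathlib

open scoped InnerProductSpace

set_option synthInstance.maxHeartbeats 400000
set_option maxHeartbeats 800000

instance piLp_completeSpace {H : Type*} [NormedAddCommGroup H] [InnerProductSpace ℂ H]
    [CompleteSpace H] {n : ℕ} : CompleteSpace (PiLp 2 (fun _ : Fin n => H)) := by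
  have e := (PiLp.continuousLinearEquiv 2 ℂ (fun _ : Fin n => H)).symm
  exact (e.isUniformEmbedding.isUniformInducing.completeSpace_congr e.surjective).mp inferInstance

/-- The weight `ρ_m(α) = (m+|α|-1)!/(α!(m-1)!)`. -/
noncomputable def rhoR (m : ℕ) {n : ℕ} (α : Fin n → ℕ) : ℝ :=
  ((m + (∑ i, α i) - 1).factorial : ℝ) /
    ((∏ i, ((α i).factorial : ℝ)) * ((m - 1).factorial : ℝ))

lemma rhoR_pos (m : ℕ) {n : ℕ} (α : Fin n → ℕ) : 0 < rhoR m α := by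
  unfold rhoR
  apply div_pos
  · exact_mod_cast Nat.factorial_pos _
  · exact mul_pos (Finset.prod_pos fun i _ => by exact_mod_cast Nat.factorial_pos _)
      (by exact_mod_cast Nat.factorial_pos _)

lemma sub_single_eq {n : ℕ} (β : Fin n → ℕ) (i : Fin n) :
    β - Pi.single i 1 = Function.update β i (β i - 1) := by
  funext k
  by_cases hk : k = i
  · subst hk; simp
  · simp [Pi.single_apply, Function.update_apply, hk]

lemma rhoR_inv_eq (m : ℕ) (hm : 1 ≤ m) {n : ℕ} (β : Fin n → ℕ) (i : Fin n)
    (hi : 1 ≤ β i) :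
    (rhoR m β)⁻¹ =
      (β i : ℝ) / ((m : ℝ) + (∑ k, β k) - 1) * (rhoR m (β - Pi.single i 1))⁻¹ := by
  obtain ⟨m', rfl⟩ : ∃ m', m = m' + 1 := ⟨m - 1, by omega⟩
  obtain ⟨b, hb⟩ : ∃ b, β i = b + 1 := ⟨β i - 1, by omega⟩
  rw [sub_single_eq]
  set γ := Function.update β i (β i - 1) with hγ
  have hγi : γ i = b := by rw [hγ]; simp [hb]
  have hγk : ∀ k, k ≠ i → γ k = β k := by
    intro k hk; rw [hγ, Function.update_of_ne hk]
  have hsum' : ∑ k, β k = (∑ k, γ k) + 1 := by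
    have h1 : ∑ k, β k = β i + ∑ k ∈ Finset.univ.erase i, β k :=
      (Finset.add_sum_erase _ β (Finset.mem_univ i)).symm
    have h2 : ∑ k, γ k = γ i + ∑ k ∈ Finset.univ.erase i, γ k :=
      (Finset.add_sum_erase _ γ (Finset.mem_univ i)).symm
    have h3 : ∑ k ∈ Finset.univ.erase i, γ k = ∑ k ∈ Finset.univ.erase i, β k :=
      Finset.sum_congr rfl fun k hk => hγk k (Finset.ne_of_mem_erase hk)
    rw [h1, h2, h3, hγi, hb]
    omega
  set t := ∑ k, γ k with ht
  have hprod : (∏ k, ((β k).factorial : ℝ)) = (b + 1) * ∏ k, ((γ k).factorial : ℝ) := by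
    rw [← Finset.mul_prod_erase Finset.univ (fun k => ((β k).factorial : ℝ)) (Finset.mem_univ i),
        ← Finset.mul_prod_erase Finset.univ (fun k => ((γ k).factorial : ℝ)) (Finset.mem_univ i)]
    have h3 : ∏ k ∈ Finset.univ.erase i, ((γ k).factorial : ℝ) =
        ∏ k ∈ Finset.univ.erase i, ((β k).factorial : ℝ) :=
      Finset.prod_congr rfl fun k hk => by rw [hγk k (Finset.ne_of_mem_erase hk)]
    rw [h3, hγi, hb, Nat.factorial_succ]
    push_cast
    ring
  unfold rhoR
  rw [hsum', hb]
  have h1 : m' + 1 + (t + 1) - 1 = (m' + t) + 1 := by omega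
  have h2 : m' + 1 + t - 1 = m' + t := by omega
  have h3 : m' + 1 - 1 = m' := by omega
  rw [h1, h2, h3, Nat.factorial_succ, hprod, inv_div, inv_div, div_mul_div_comm]
  push_cast
  congr 1 <;> ring

/-- On `H_m(𝔹)` — modelled abstractly as a Hilbert space `H` with an orthogonal family
`e α` of monomials satisfying `⟪e α, e β⟫ = δ_{αβ}/ρ_m(α)` and having dense span — the row
operator `M_z : H_m(𝔹)ⁿ → H_m(𝔹)`, `(f_i) ↦ ∑ z_i f_i`, satisfies
`M_z M_z* = ∑_{j=1}^∞ (j/(m+j-1)) P_{ℍ_j}`, where `P_{ℍ_j}` is the orthogonal projection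
onto the homogeneous polynomials of degree `j`.  (The `j = 0` summand vanishes.) -/
theorem row_op_identity (n m : ℕ) (hm : 1 ≤ m)
    {H : Type*} [NormedAddCommGroup H] [InnerProductSpace ℂ H] [CompleteSpace H]
    (e : (Fin n → ℕ) → H)
    (horth : ∀ α β, ⟪e α, e β⟫_ℂ = if α = β then ((rhoR m α)⁻¹ : ℂ) else 0)
    (hdense : Dense ((Submodule.span ℂ (Set.range e) : Submodule ℂ H) : Set H))
    (Mz : Fin n → H →L[ℂ] H)
    (hMz : ∀ i α, Mz i (e α) = e (α + Pi.single i 1))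
    (Mrow : PiLp 2 (fun _ : Fin n => H) →L[ℂ] H)
    (hMrow : ∀ f, Mrow f = ∑ i, Mz i (f i))
    (P : ℕ → H →L[ℂ] H)
    (hPsa : ∀ j, IsSelfAdjoint (P j))
    (hP : ∀ j α, P j (e α) = if (∑ i, α i) = j then e α else 0) :
    ∀ f : H,
      HasSum (fun j : ℕ => ((j : ℂ) / ((m : ℂ) + j - 1)) • P j f)
        (Mrow ((Mrow).adjoint f)) := by
  classical
  intro f
  set c : ℕ → ℂ := fun j => (j : ℂ) / ((m : ℂ) + j - 1) with hc
  -- key inner-product identity for Mz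
  have hmz : ∀ (β : Fin n → ℕ) (i : Fin n) (ζ : H),
      ⟪e β, Mz i ζ⟫_ℂ =
        ((β i : ℂ) / ((m : ℂ) + (∑ k, β k) - 1)) * ⟪e (β - Pi.single i 1), ζ⟫_ℂ := by
    intro β i
    have key : ((innerSL ℂ (e β)).comp (Mz i)) =
        (((β i : ℂ) / ((m : ℂ) + (∑ k, β k) - 1)) •
          (innerSL ℂ (e (β - Pi.single i 1)))) := by
      apply ContinuousLinearMap.ext_on hdense
      rintro ζ ⟨γ, rfl⟩
      simp only [ContinuousLinearMap.comp_apply, ContinuousLinearMap.smul_apply,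
        innerSL_apply_apply, smul_eq_mul]
      rw [hMz, horth, horth]
      by_cases hβi : 1 ≤ β i
      · have hiff : (β = γ + Pi.single i 1) ↔ (β - Pi.single i 1 = γ) := by
          constructor
          · rintro rfl
            funext k
            by_cases hk : k = i
            · subst hk; simp [Pi.single_apply]
            · simp [Pi.single_apply, hk]
          · rintro rfl
            funext k
            by_cases hk : k = i
            · subst hk
              simp only [Pi.sub_apply, Pi.add_apply, Pi.single_eq_same]
              omega
            · simp [Pi.single_apply, hk]
        by_cases hcond : β - Pi.single i 1 = γ
        · rw [if_pos (hiff.mpr hcond), if_pos hcond]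
          have hr := rhoR_inv_eq m hm β i hβi
          exact_mod_cast congrArg (Complex.ofReal) hr
        · rw [if_neg (fun h => hcond (hiff.mp h)), if_neg hcond, mul_zero]
      · have h0 : β i = 0 := by omega
        rw [if_neg, h0]
        · simp
        · intro h
          have : β i = γ i + 1 := by rw [h]; simp
          omega
    intro ζ
    have := DFunLike.congr_fun key ζ
    simpa using this
  -- self-adjointness transfer
  have hPinner : ∀ (j : ℕ) (x y : H), ⟪P j x, y⟫_ℂ = ⟪x, P j y⟫_ℂ := by
    intro j x y
    conv_lhs => rw [← (hPsa j).adjoint_eq]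
    exact ContinuousLinearMap.adjoint_inner_left _ _ _
  -- composition identities for projections
  have hPP : ∀ j k, (P j).comp (P k) = if j = k then P k else 0 := by
    intro j k
    apply ContinuousLinearMap.ext_on hdense
    rintro x ⟨α, rfl⟩
    simp only [ContinuousLinearMap.comp_apply]
    rw [hP k α]
    by_cases hα : (∑ i, α i) = k
    · rw [if_pos hα, hP j α]
      by_cases hjk : j = k
      · simp [hjk, hα, hP]
      · rw [if_neg (fun h : (∑ i, α i) = j => hjk (h.symm.trans hα))]
        simp [hjk]
    · rw [if_neg hα, map_zero]
      by_cases hjk : j = k <;> simp [hjk, hP, hα]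
  have hPidem : ∀ j (x : H), P j (P j x) = P j x := by
    intro j x
    have := DFunLike.congr_fun (hPP j j) x
    simpa using this
  have hPzero : ∀ j k, j ≠ k → ∀ x : H, P j (P k x) = 0 := by
    intro j k hjk x
    have := DFunLike.congr_fun (hPP j k) x
    simpa [hjk] using this
  -- the star identity: ⟪e β, Mrow (Mrow† f)⟫ = c(|β|) ⟪e β, f⟫
  have hstar : ∀ (β : Fin n → ℕ) (g : H),
      ⟪e β, Mrow (Mrow.adjoint g)⟫_ℂ = c (∑ k, β k) * ⟪e β, g⟫_ℂ := by
    intro β g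
    rw [hMrow, inner_sum]
    have hsingle : ∀ (i : Fin n) (x : H),
        ⟪x, (Mrow.adjoint g) i⟫_ℂ = ⟪Mz i x, g⟫_ℂ := by
      intro i x
      set v : PiLp 2 (fun _ : Fin n => H) :=
        (WithLp.equiv 2 (∀ _ : Fin n, H)).symm (Pi.single i x) with hv
      have h1 : ⟪v, Mrow.adjoint g⟫_ℂ = ⟪x, (Mrow.adjoint g) i⟫_ℂ := by
        rw [PiLp.inner_apply]
        rw [Finset.sum_eq_single i]
        · simp [hv, WithLp.equiv_symm_apply]
        · intro k _ hk
          simp [hv, WithLp.equiv_symm_apply, Pi.single_eq_of_ne hk, hk]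
        · intro h; exact absurd (Finset.mem_univ i) h
      have h2 : ⟪v, Mrow.adjoint g⟫_ℂ = ⟪Mrow v, g⟫_ℂ :=
        ContinuousLinearMap.adjoint_inner_right _ _ _
      have h3 : Mrow v = Mz i x := by
        rw [hMrow]
        rw [Finset.sum_eq_single i]
        · simp [hv, WithLp.equiv_symm_apply]
        · intro k _ hk
          simp [hv, WithLp.equiv_symm_apply, Pi.single_eq_of_ne hk, hk]
        · intro h; exact absurd (Finset.mem_univ i) h
      rw [← h1, h2, h3]
    have hterm : ∀ i : Fin n, ⟪e β, Mz i ((Mrow.adjoint g) i)⟫_ℂ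
        = ((β i : ℂ) / ((m : ℂ) + (∑ k, β k) - 1)) * ⟪e β, g⟫_ℂ := by
      intro i
      rw [hmz β i, hsingle i]
      by_cases hβi : 1 ≤ β i
      · rw [hMz]
        have hβ : β - Pi.single i 1 + Pi.single i 1 = β := by
          funext k
          by_cases hk : k = i
          · subst hk
            simp only [Pi.add_apply, Pi.sub_apply, Pi.single_eq_same]
            omega
          · simp [Pi.single_apply, hk]
        rw [hβ]
      · have h0 : β i = 0 := by omega
        simp [h0]
    rw [Finset.sum_congr rfl (fun i _ => hterm i), ← Finset.sum_mul, hc]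
    congr 1
    rw [← Finset.sum_div]
    congr 1
    push_cast
    rfl
  -- orthogonality of ranges
  have hortho : OrthogonalFamily ℂ (fun j => ↥(LinearMap.range ((P j : H →ₗ[ℂ] H))))
      (fun j => (LinearMap.range ((P j : H →ₗ[ℂ] H))).subtypeₗᵢ) := by
    intro j k hjk x y
    obtain ⟨a, ha⟩ := x.2
    obtain ⟨b, hb⟩ := y.2
    show ⟪(x : H), (y : H)⟫_ℂ = 0
    rw [← ha, ← hb, ContinuousLinearMap.coe_coe, ContinuousLinearMap.coe_coe, hPinner j a (P k b), hPzero j k hjk, inner_zero_right]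
  -- summability of ∑ ‖P j f‖²
  have hnorm_sq : ∀ j, ‖P j f‖ ^ 2 = RCLike.re ⟪f, P j f⟫_ℂ := by
    intro j
    rw [← inner_self_eq_norm_sq (𝕜 := ℂ), hPinner j, hPidem j]
  have hbound : ∀ N : ℕ, ∑ j ∈ Finset.range N, ‖P j f‖ ^ 2 ≤ ‖f‖ ^ 2 := by
    intro N
    set Q : H →L[ℂ] H := ∑ j ∈ Finset.range N, P j with hQdef
    have hQf : Q f = ∑ j ∈ Finset.range N, P j f := by
      simp [hQdef, ContinuousLinearMap.sum_apply]
    have hsum_eq : ∑ j ∈ Finset.range N, ‖P j f‖ ^ 2 = RCLike.re ⟪f, Q f⟫_ℂ := by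
      rw [hQf, inner_sum, map_sum]
      exact Finset.sum_congr rfl fun j _ => hnorm_sq j
    have hQP : ∀ j ∈ Finset.range N, Q (P j f) = P j f := by
      intro j hj
      rw [hQdef, ContinuousLinearMap.sum_apply, Finset.sum_eq_single j]
      · exact hPidem j f
      · intro k _ hkj
        exact hPzero k j hkj f
      · intro h; exact absurd hj h
    have hQQ : Q (Q f) = Q f := by
      rw [hQf, map_sum, Finset.sum_congr rfl hQP, ← hQf]
    have hQsa : ∀ x y : H, ⟪Q x, y⟫_ℂ = ⟪x, Q y⟫_ℂ := by
      intro x y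
      rw [hQdef]
      simp only [ContinuousLinearMap.sum_apply, sum_inner, inner_sum]
      exact Finset.sum_congr rfl fun j _ => hPinner j x y
    have hQnorm : ‖Q f‖ ^ 2 = RCLike.re ⟪f, Q f⟫_ℂ := by
      rw [← inner_self_eq_norm_sq (𝕜 := ℂ), hQsa, hQQ]
    have hre : RCLike.re ⟪f, Q f⟫_ℂ ≤ ‖f‖ * ‖Q f‖ :=
      le_trans (RCLike.re_le_norm _) (norm_inner_le_norm f (Q f))
    nlinarith [norm_nonneg (Q f), norm_nonneg f, sq_nonneg (‖Q f‖ - ‖f‖)]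
  have hsummable2 : Summable (fun j => ‖P j f‖ ^ 2) :=
    summable_of_sum_range_le (fun j => sq_nonneg _) hbound
  have hcle : ∀ j, ‖c j‖ ≤ 1 := by
    intro j
    rcases Nat.eq_zero_or_pos j with h | h
    · simp [hc, h]
    · have hcast : ((m : ℂ) + j - 1) = ((m + j - 1 : ℕ) : ℂ) := by
        push_cast [Nat.cast_sub (by omega : 1 ≤ m + j)]
        ring
      rw [hc]
      simp only [hcast, norm_div, Complex.norm_natCast]
      rw [div_le_one (by exact_mod_cast (by omega : 0 < m + j - 1))]
      exact_mod_cast (by omega : j ≤ m + j - 1)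
  have hgsq : Summable (fun j => ‖c j • P j f‖ ^ 2) := by
    apply hsummable2.of_nonneg_of_le (fun j => sq_nonneg _)
    intro j
    rw [norm_smul, mul_pow]
    have h1 := hcle j
    have h3 := norm_nonneg (c j)
    have h4 : ‖c j‖ ^ 2 ≤ 1 := by nlinarith
    nlinarith [sq_nonneg ‖(P j) f‖]
  have hmemK : ∀ j, c j • P j f ∈ LinearMap.range ((P j : H →ₗ[ℂ] H)) :=
    fun j => Submodule.smul_mem _ _ ⟨f, rfl⟩
  have hsummg : Summable (fun j => c j • P j f) := by
    have h := (hortho.summable_iff_norm_sq_summable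
      (fun j => (⟨c j • P j f, hmemK j⟩ : LinearMap.range ((P j : H →ₗ[ℂ] H))))).mpr (by simpa using hgsq)
    simpa using h
  obtain ⟨L, hL⟩ := hsummg
  -- identify the inner products of L
  have hinner_L : ∀ β, ⟪e β, L⟫_ℂ = c (∑ k, β k) * ⟪e β, f⟫_ℂ := by
    intro β
    have h1 : HasSum (fun j => ⟪e β, c j • P j f⟫_ℂ) ⟪e β, L⟫_ℂ :=
      hL.mapL (innerSL ℂ (e β))
    have h2 : (fun j => ⟪e β, c j • P j f⟫_ℂ) =
        fun j => if j = (∑ k, β k) then c j * ⟪e β, f⟫_ℂ else 0 := by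
      funext j
      rw [inner_smul_right, ← hPinner j (e β) f, hP]
      by_cases h : (∑ i, β i) = j
      · rw [if_pos h, if_pos h.symm]
      · rw [if_neg h, if_neg (fun hh => h hh.symm), inner_zero_left, mul_zero]
    rw [h2] at h1
    have h3 : HasSum (fun j => if j = (∑ k, β k) then c j * ⟪e β, f⟫_ℂ else 0)
        (c (∑ k, β k) * ⟪e β, f⟫_ℂ) := by
      have h4 := hasSum_ite_eq (∑ k, β k) (c (∑ k, β k) * ⟪e β, f⟫_ℂ)
      have heq : (fun j => if j = (∑ k, β k) then c j * ⟪e β, f⟫_ℂ else 0)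
          = (fun j => if j = (∑ k, β k) then c (∑ k, β k) * ⟪e β, f⟫_ℂ else 0) := by
        funext j; by_cases h : j = (∑ k, β k) <;> simp [h]
      rw [heq]; exact h4
    exact h1.unique h3
  -- conclude L = Mrow (Mrow† f)
  have hdiff : Mrow (Mrow.adjoint f) = L := by
    set d := Mrow (Mrow.adjoint f) - L with hd
    have hzero : innerSL ℂ d = 0 := by
      apply ContinuousLinearMap.ext_on hdense
      rintro x ⟨β, rfl⟩
      simp only [innerSL_apply_apply, ContinuousLinearMap.zero_apply]
      have h1 : ⟪e β, d⟫_ℂ = 0 := by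
        rw [hd, inner_sub_right, hstar β f, hinner_L β, sub_self]
      calc ⟪d, e β⟫_ℂ = starRingEnd ℂ ⟪e β, d⟫_ℂ := (inner_conj_symm _ _).symm
        _ = 0 := by rw [h1, map_zero]
    have h2 : ⟪d, d⟫_ℂ = 0 := by
      have := DFunLike.congr_fun hzero d
      simpa using this
    have h3 : d = 0 := inner_self_eq_zero.mp h2
    have := sub_eq_zero.mp (hd ▸ h3)
    exact this
  rw [hdiff]
  exact hL
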